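/- For any matrices X, Y ∈ M_n(ℂ), the block matrix [[|X*|+|Y*|, X+Y],[X*+Y*, |X|+|Y|]] is positive semidefinite. -/

import Mathlib

open Matrix
open scoped ComplexOrder

open scoped MatrixOrder in
/-- The absolute value `|X| = (X* X)^{1/2}` of a complex matrix. -/
noncomputable def matAbs {n : ℕ} (X : Matrix (Fin n) (Fin n) ℂ) : Matrix (Fin n) (Fin n) ℂ :=
  CFC.sqrt (Xᴴ * X)

namespace AuxAbs

variable {n : ℕ}

/-- Functional calculus on `XᴴX`. -/
noncomputable def phi (X : Matrix (Fin n) (Fin n) ℂ) (f : ℝ → ℝ) : Matrix (Fin n) (Fin n) ℂ :=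
  (Matrix.posSemidef_conjTranspose_mul_self X).1.eigenvectorUnitary.1 *
    diagonal ((↑) ∘ f ∘ (Matrix.posSemidef_conjTranspose_mul_self X).1.eigenvalues) *
    (star (Matrix.posSemidef_conjTranspose_mul_self X).1.eigenvectorUnitary.1 :
      Matrix (Fin n) (Fin n) ℂ)

lemma dmul (mu : Fin n → ℝ) (f g : ℝ → ℝ) :
    (diagonal ((↑) ∘ f ∘ mu) : Matrix (Fin n) (Fin n) ℂ) * diagonal ((↑) ∘ g ∘ mu) =
      diagonal ((↑) ∘ (fun t => f t * g t) ∘ mu) := by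
  rw [diagonal_mul_diagonal]
  have : (fun i => ((Complex.ofReal ∘ f ∘ mu) i * (Complex.ofReal ∘ g ∘ mu) i)) =
      ((↑) ∘ (fun t => f t * g t) ∘ mu : Fin n → ℂ) := by
    funext i
    simp [Function.comp, Complex.ofReal_mul]
  rw [this]

lemma dstar (mu : Fin n → ℝ) (f : ℝ → ℝ) :
    star (((↑) ∘ f ∘ mu : Fin n → ℂ)) = ((↑) ∘ f ∘ mu : Fin n → ℂ) := by
  funext i
  simp [Function.comp, Pi.star_apply, Complex.star_def, Complex.conj_ofReal]

lemma dcongr (mu : Fin n → ℝ) (f g : ℝ → ℝ) (h : ∀ i, f (mu i) = g (mu i)) :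
    (diagonal ((↑) ∘ f ∘ mu) : Matrix (Fin n) (Fin n) ℂ) = diagonal ((↑) ∘ g ∘ mu) := by
  have : ((↑) ∘ f ∘ mu : Fin n → ℂ) = ((↑) ∘ g ∘ mu : Fin n → ℂ) := by
    funext i
    simp [Function.comp, h i]
  rw [this]

open scoped MatrixOrder in
lemma phi_sqrt (X : Matrix (Fin n) (Fin n) ℂ) : phi X Real.sqrt = matAbs X := by
  have h0 : (0 : Matrix (Fin n) (Fin n) ℂ) ≤ Xᴴ * X :=
    Matrix.nonneg_iff_posSemidef.mpr (Matrix.posSemidef_conjTranspose_mul_self X)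
  unfold matAbs
  rw [CFC.sqrt_eq_real_sqrt _ h0, cfcₙ_eq_cfc (hf0 := Real.sqrt_zero),
    (Matrix.posSemidef_conjTranspose_mul_self X).1.cfc_eq]
  rfl

lemma phi_mul (X : Matrix (Fin n) (Fin n) ℂ) (f g : ℝ → ℝ) :
    phi X f * phi X g = phi X (fun t => f t * g t) := by
  set h := (Matrix.posSemidef_conjTranspose_mul_self X).1
  have hU : (star h.eigenvectorUnitary.1 : Matrix (Fin n) (Fin n) ℂ) * h.eigenvectorUnitary.1 = 1 :=
    mem_unitaryGroup_iff'.mp h.eigenvectorUnitary.2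
  unfold phi
  rw [show ∀ (U D E S : Matrix (Fin n) (Fin n) ℂ), U*D*S*(U*E*S) = U*(D*((S*U)*E))*S by
    intros; noncomm_ring]
  rw [hU, one_mul, dmul]

lemma phi_conjTranspose (X : Matrix (Fin n) (Fin n) ℂ) (f : ℝ → ℝ) :
    (phi X f)ᴴ = phi X f := by
  unfold phi
  rw [conjTranspose_mul, conjTranspose_mul, diagonal_conjTranspose, dstar,
    star_eq_conjTranspose, conjTranspose_conjTranspose, mul_assoc]

lemma phi_congr (X : Matrix (Fin n) (Fin n) ℂ) (f g : ℝ → ℝ)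
    (h : ∀ t, 0 ≤ t → f t = g t) : phi X f = phi X g := by
  unfold phi
  rw [dcongr _ f g fun i => h _ ((Matrix.posSemidef_conjTranspose_mul_self X).eigenvalues_nonneg i)]

lemma phi_id (X : Matrix (Fin n) (Fin n) ℂ) : phi X (fun t => t) = Xᴴ * X := by
  have := (Matrix.posSemidef_conjTranspose_mul_self X).1.spectral_theorem
  exact this.symm

end AuxAbs

namespace AuxAbs2
open AuxAbs
variable {n : ℕ}

noncomputable def chi : ℝ → ℝ := fun t => if t = 0 then 0 else 1
noncomputable def gg : ℝ → ℝ := fun t => if t = 0 then 0 else (Real.sqrt (Real.sqrt t))⁻¹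
noncomputable def qq : ℝ → ℝ := fun t => Real.sqrt (Real.sqrt t)

lemma mul_phi_chi (X : Matrix (Fin n) (Fin n) ℂ) : X * phi X chi = X := by
  unfold phi
  set h := (Matrix.posSemidef_conjTranspose_mul_self X).1 with hh
  set U : Matrix (Fin n) (Fin n) ℂ := h.eigenvectorUnitary.1 with hUdef
  have hU1 : star U * U = 1 := mem_unitaryGroup_iff'.mp h.eigenvectorUnitary.2
  have hU2 : U * star U = 1 := mem_unitaryGroup_iff.mp h.eigenvectorUnitary.2
  have hDiag : (X * U)ᴴ * (X * U) = diagonal (Complex.ofReal ∘ h.eigenvalues) := by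
    have hs : star U * (Xᴴ * X) * U = diagonal (RCLike.ofReal ∘ h.eigenvalues) :=
      by have := h.conjStarAlgAut_star_eigenvectorUnitary; rwa [Unitary.conjStarAlgAut_star_apply] at this
    calc (X * U)ᴴ * (X * U) = star U * (Xᴴ * X) * U := by
          rw [conjTranspose_mul, star_eq_conjTranspose]; noncomm_ring
      _ = diagonal (Complex.ofReal ∘ h.eigenvalues) := hs
  have hcol : ∀ j, h.eigenvalues j = 0 → ∀ i, (X * U) i j = 0 := by
    intro j hj i
    have h0 : star (fun k => (X * U) k j) ⬝ᵥ (fun k => (X * U) k j) = 0 := by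
      have := congrFun (congrFun hDiag j) j
      rw [diagonal_apply_eq] at this
      simpa [Matrix.mul_apply, dotProduct, Matrix.conjTranspose_apply, hj, mul_comm] using this
    have := dotProduct_star_self_eq_zero.mp h0
    exact congrFun this i
  have hXUD : X * U * diagonal ((↑) ∘ chi ∘ h.eigenvalues) = X * U := by
    ext i j
    rw [mul_diagonal]
    by_cases hj : h.eigenvalues j = 0
    · simp [Function.comp, chi, hj, hcol j hj i]
    · simp [Function.comp, chi, hj]
  calc X * (U * diagonal ((↑) ∘ chi ∘ h.eigenvalues) * star U)
      = (X * U * diagonal ((↑) ∘ chi ∘ h.eigenvalues)) * star U := by noncomm_ring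
    _ = X * U * star U := by rw [hXUD]
    _ = X := by rw [mul_assoc, hU2, mul_one]

open scoped MatrixOrder in
lemma key (X : Matrix (Fin n) (Fin n) ℂ) :
    (Matrix.fromBlocks (matAbs Xᴴ) X Xᴴ (matAbs X)).PosSemidef := by
  set A := phi X gg * Xᴴ with hA
  set B := phi X qq with hB
  have hgq : ∀ t : ℝ, 0 ≤ t → gg t * qq t = chi t := by
    intro t ht
    by_cases h : t = 0
    · simp [gg, qq, chi, h]
    · have hpos : 0 < t := lt_of_le_of_ne ht (Ne.symm h)
      have hs : 0 < Real.sqrt (Real.sqrt t) := Real.sqrt_pos.mpr (Real.sqrt_pos.mpr hpos)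
      simp [gg, qq, chi, h, inv_mul_cancel₀ hs.ne']
  have hgtg : ∀ t : ℝ, 0 ≤ t → gg t * gg t * t * (gg t * gg t) = chi t := by
    intro t ht
    by_cases h : t = 0
    · simp [gg, chi, h]
    · have hpos : 0 < t := lt_of_le_of_ne ht (Ne.symm h)
      have hs : 0 < Real.sqrt (Real.sqrt t) := Real.sqrt_pos.mpr (Real.sqrt_pos.mpr hpos)
      have h1 : Real.sqrt (Real.sqrt t) * Real.sqrt (Real.sqrt t) = Real.sqrt t :=
        Real.mul_self_sqrt (Real.sqrt_nonneg t)
      have h2 : Real.sqrt t * Real.sqrt t = t := Real.mul_self_sqrt ht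
      simp only [gg, chi, if_neg h]
      field_simp
      rw [show √√t ^ 4 = (√√t * √√t) * (√√t * √√t) by ring, h1, h2]
  have hAB : Aᴴ * B = X := by
    rw [hA, hB, conjTranspose_mul, phi_conjTranspose, conjTranspose_conjTranspose, mul_assoc,
      phi_mul, phi_congr X _ chi hgq, mul_phi_chi]
  have hBA : Bᴴ * A = Xᴴ := by
    have : Bᴴ * A = (Aᴴ * B)ᴴ := by
      rw [conjTranspose_mul, conjTranspose_conjTranspose]
    rw [this, hAB]
  have hBB : Bᴴ * B = matAbs X := by
    rw [hB, phi_conjTranspose, phi_mul,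
      phi_congr X _ Real.sqrt
        (fun t _ => show qq t * qq t = Real.sqrt t from Real.mul_self_sqrt (Real.sqrt_nonneg t)),
      phi_sqrt]
  have e1 : Aᴴ * A = X * phi X (fun t => gg t * gg t) * Xᴴ := by
    rw [hA, conjTranspose_mul, phi_conjTranspose, conjTranspose_conjTranspose, ← phi_mul,
      ← mul_assoc, ← mul_assoc]
  have hAA : Aᴴ * A = matAbs Xᴴ := by
    have hps : (X * phi X (fun t => gg t * gg t) * Xᴴ).PosSemidef := by
      rw [← e1, ← conjTranspose_conjTranspose A]
      exact Matrix.posSemidef_conjTranspose_mul_self _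
    have hsq : (X * phi X (fun t => gg t * gg t) * Xᴴ) ^ 2 = Xᴴᴴ * Xᴴ := by
      rw [pow_two, conjTranspose_conjTranspose]
      calc X * phi X (fun t => gg t * gg t) * Xᴴ * (X * phi X (fun t => gg t * gg t) * Xᴴ)
          = X * (phi X (fun t => gg t * gg t) * (Xᴴ * X) * phi X (fun t => gg t * gg t)) * Xᴴ := by
            noncomm_ring
        _ = X * (phi X (fun t => gg t * gg t) * phi X (fun t => t) *
              phi X (fun t => gg t * gg t)) * Xᴴ := by rw [phi_id]
        _ = X * phi X (fun t => gg t * gg t * t * (gg t * gg t)) * Xᴴ := by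
            rw [phi_mul, phi_mul]
        _ = X * phi X chi * Xᴴ := by rw [phi_congr X _ chi hgtg]
        _ = X * Xᴴ := by rw [mul_phi_chi]
    have := ((CFC.sqrt_eq_iff _ _ (Matrix.nonneg_iff_posSemidef.mpr
      (Matrix.posSemidef_conjTranspose_mul_self Xᴴ)) (Matrix.nonneg_iff_posSemidef.mpr hps)).mpr
      (by rw [← pow_two]; exact hsq)).symm
    rw [e1, this]
    rfl
  have hmat : Matrix.fromBlocks (matAbs Xᴴ) X Xᴴ (matAbs X) =
      (Matrix.fromBlocks A B 0 0)ᴴ * Matrix.fromBlocks A B 0 0 := by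
    rw [fromBlocks_conjTranspose, fromBlocks_multiply]
    simp [hAA, hAB, hBA, hBB]
  rw [hmat]
  exact Matrix.posSemidef_conjTranspose_mul_self _

end AuxAbs2

/-- The block matrix `[[|X*|+|Y*|, X+Y],[X*+Y*, |X|+|Y|]]` is positive semidefinite. -/
theorem stmt4 {n : ℕ} (X Y : Matrix (Fin n) (Fin n) ℂ) :
    (Matrix.fromBlocks (matAbs Xᴴ + matAbs Yᴴ) (X + Y) (Xᴴ + Yᴴ)
      (matAbs X + matAbs Y)).PosSemidef := by
  have := (AuxAbs2.key X).add (AuxAbs2.key Y)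
  rwa [Matrix.fromBlocks_add] at this
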